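/- Let A ∈ (ℝ ∪ {−∞})^{m×n} be a regular matrix. Then the minimum of 𝟙ᵀ A x ⊗ (A x)⁻ 𝟙 over all regular vectors x ∈ ℝⁿ equals Δ = (A (𝟙ᵀ A)⁻)⁻ 𝟙, and this minimum is attained at every vector x = α (𝟙ᵀ A)⁻ with α ∈ ℝ. -/

import Mathlib

open Finset

noncomputable section

namespace MaxPlus

/-- Max-plus multiplicative inverse: `-a` for real `a`, `⊥` for `⊥`. -/
def tinv (a : WithBot ℝ) : WithBot ℝ := WithBot.map (fun r => -r) a

/-- Max-plus rational power `a^(1/k) = a / k`. -/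
def trt (a : WithBot ℝ) (k : ℕ) : WithBot ℝ := WithBot.map (fun r => r / (k : ℝ)) a

/-- A vector is regular if it has no `⊥` (= -∞) entries. -/
def Reg {n : ℕ} (x : Fin n → WithBot ℝ) : Prop := ∀ i, x i ≠ ⊥

/-- `cdot q x = q⁻ x`, the max-plus product of the conjugate row vector `q⁻` with `x`. -/
def cdot {n : ℕ} (q x : Fin n → WithBot ℝ) : WithBot ℝ :=
  Finset.univ.sup fun i => tinv (q i) + x i

/-- Max-plus matrix-vector product. -/
def mulVec {m n : ℕ} (A : Matrix (Fin m) (Fin n) (WithBot ℝ)) (x : Fin n → WithBot ℝ) :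
    Fin m → WithBot ℝ := fun i => Finset.univ.sup fun j => A i j + x j

/-- Max-plus matrix product. -/
def tmul {l m n : ℕ} (A : Matrix (Fin l) (Fin m) (WithBot ℝ))
    (B : Matrix (Fin m) (Fin n) (WithBot ℝ)) : Matrix (Fin l) (Fin n) (WithBot ℝ) :=
  fun i j => Finset.univ.sup fun k => A i k + B k j

/-- Multiplicative conjugate transpose of a matrix. -/
def conjM {m n : ℕ} (A : Matrix (Fin m) (Fin n) (WithBot ℝ)) :
    Matrix (Fin n) (Fin m) (WithBot ℝ) := fun i j => tinv (A j i)

/-- Max-plus identity matrix. -/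
def tId {n : ℕ} : Matrix (Fin n) (Fin n) (WithBot ℝ) := fun i j => if i = j then 0 else ⊥

/-- Max-plus matrix power. -/
def tpow {n : ℕ} (A : Matrix (Fin n) (Fin n) (WithBot ℝ)) : ℕ → Matrix (Fin n) (Fin n) (WithBot ℝ)
  | 0 => tId
  | k + 1 => tmul A (tpow A k)

/-- Max-plus trace. -/
def ttr {n : ℕ} (A : Matrix (Fin n) (Fin n) (WithBot ℝ)) : WithBot ℝ :=
  Finset.univ.sup fun i => A i i

/-- `Tr(A) = tr A ⊕ tr A² ⊕ ⋯ ⊕ tr Aⁿ`. -/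
def TrOp {n : ℕ} (A : Matrix (Fin n) (Fin n) (WithBot ℝ)) : WithBot ℝ :=
  (Finset.Icc 1 n).sup fun m => ttr (tpow A m)

/-- Kleene star `A* = I ⊕ A ⊕ ⋯ ⊕ A^(n-1)`. -/
def kstar {n : ℕ} (A : Matrix (Fin n) (Fin n) (WithBot ℝ)) : Matrix (Fin n) (Fin n) (WithBot ℝ) :=
  fun i j => (Finset.range n).sup fun k => tpow A k i j

/-- Max-plus spectral radius `λ = ⊕_{m=1}^n (tr A^m)^(1/m)`. -/
def specRad {n : ℕ} (A : Matrix (Fin n) (Fin n) (WithBot ℝ)) : WithBot ℝ :=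
  (Finset.Icc 1 n).sup fun m => trt (ttr (tpow A m)) m

/-- `prodAB A B [i₁, …, i_k] = A B^{i₁} A B^{i₂} ⋯ A B^{i_k}`. -/
def prodAB {n : ℕ} (A B : Matrix (Fin n) (Fin n) (WithBot ℝ)) :
    List ℕ → Matrix (Fin n) (Fin n) (WithBot ℝ)
  | [] => tId
  | i :: t => tmul (tmul A (tpow B i)) (prodAB A B t)

/-- The all-ones (all-`𝟙 = 0`) vector. -/
def onesV (n : ℕ) : Fin n → WithBot ℝ := fun _ => 0

end MaxPlus

open MaxPlus

namespace MaxPlus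

lemma tinv_coe (r : ℝ) : tinv (r : WithBot ℝ) = ((-r : ℝ) : WithBot ℝ) := rfl

lemma tinv_zero : tinv (0 : WithBot ℝ) = 0 := by
  have h : (0 : WithBot ℝ) = ((0:ℝ) : WithBot ℝ) := rfl
  rw [h, tinv_coe]; norm_num

lemma cdot_ones_left {k : ℕ} (v : Fin k → WithBot ℝ) :
    cdot (onesV k) v = Finset.univ.sup v := by
  unfold cdot onesV
  simp [tinv_zero]

lemma cdot_ones_right {k : ℕ} (v : Fin k → WithBot ℝ) :
    cdot v (onesV k) = Finset.univ.sup (fun i => tinv (v i)) := by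
  unfold cdot onesV
  simp

lemma sup_add_const {k : ℕ} [Nonempty (Fin k)] (f : Fin k → WithBot ℝ) (c : ℝ) :
    Finset.univ.sup (fun j => f j + (c : WithBot ℝ))
      = Finset.univ.sup f + (c : WithBot ℝ) := by
  apply le_antisymm
  · exact Finset.sup_le fun j _ => add_le_add_left (Finset.le_sup (Finset.mem_univ j)) _
  · obtain ⟨j, -, hj⟩ := Finset.exists_mem_eq_sup Finset.univ Finset.univ_nonempty f
    rw [hj]
    exact Finset.le_sup (f := fun j => f j + (c : WithBot ℝ)) (Finset.mem_univ j)

end MaxPlus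


/-- minimization of the span seminorm `𝟙ᵀ A x ⊗ (A x)⁻ 𝟙`. -/
theorem stmt_6 {m n : ℕ} (A : Matrix (Fin m) (Fin n) (WithBot ℝ))
    (hA : (∀ i, ∃ j, A i j ≠ ⊥) ∧ (∀ j, ∃ i, A i j ≠ ⊥))
    (Δ : WithBot ℝ)
    (hΔ : Δ = cdot (mulVec A
        (fun j => tinv (cdot (onesV m) (fun i => A i j)))) (onesV m)) :
    (∀ x : Fin n → WithBot ℝ, Reg x →
        Δ ≤ cdot (onesV m) (mulVec A x) + cdot (mulVec A x) (onesV m)) ∧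
      ∀ α : ℝ,
        Reg (fun j => (α : WithBot ℝ) + tinv (cdot (onesV m) (fun i => A i j))) ∧
        cdot (onesV m) (mulVec A
              (fun j => (α : WithBot ℝ) + tinv (cdot (onesV m) (fun i => A i j))))
            + cdot (mulVec A
              (fun j => (α : WithBot ℝ) + tinv (cdot (onesV m) (fun i => A i j)))) (onesV m)
          = Δ := by
  obtain ⟨hrow, hcol⟩ := hA
  rcases Nat.eq_zero_or_pos m with hm | hm
  · subst hm
    rcases Nat.eq_zero_or_pos n with hn | hn
    · subst hn
      have hD : Δ = ⊥ := by rw [hΔ]; unfold cdot; simp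
      refine ⟨?_, ?_⟩
      · intro x hx
        rw [hD]; exact bot_le
      · intro α
        refine ⟨fun j => j.elim0, ?_⟩
        rw [hD]; unfold cdot; simp
    · obtain ⟨i, -⟩ := hcol ⟨0, hn⟩
      exact i.elim0
  · rcases Nat.eq_zero_or_pos n with hn | hn
    · obtain ⟨j, -⟩ := hrow ⟨0, hm⟩
      exact absurd j.isLt (by omega)
    · haveI : Nonempty (Fin m) := ⟨⟨0, hm⟩⟩
      haveI : Nonempty (Fin n) := ⟨⟨0, hn⟩⟩
      -- column maxima q
      have hqex : ∀ j : Fin n, ∃ r : ℝ, (Finset.univ.sup fun i => A i j) = (r : WithBot ℝ) := by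
        intro j
        obtain ⟨i, hi⟩ := hcol j
        have hne : (Finset.univ.sup fun i => A i j) ≠ ⊥ := by
          intro h
          have hle := Finset.le_sup (f := fun i => A i j) (Finset.mem_univ i)
          rw [h, le_bot_iff] at hle
          exact hi hle
        obtain ⟨r, hr⟩ := WithBot.ne_bot_iff_exists.mp hne
        exact ⟨r, hr.symm⟩
      choose q hq using hqex
      have hxhat : ∀ j, tinv (cdot (onesV m) fun i => A i j) = ((-(q j) : ℝ) : WithBot ℝ) := by
        intro j; rw [cdot_ones_left, hq j, tinv_coe]
      -- w i = (A x̂)_i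
      have hwex : ∀ i : Fin m, ∃ r : ℝ,
          (Finset.univ.sup fun j => A i j + ((-(q j) : ℝ) : WithBot ℝ)) = (r : WithBot ℝ) := by
        intro i
        obtain ⟨j, hj⟩ := hrow i
        have hne : (Finset.univ.sup fun j => A i j + ((-(q j) : ℝ) : WithBot ℝ)) ≠ ⊥ := by
          intro h
          have hle := Finset.le_sup (f := fun j => A i j + ((-(q j) : ℝ) : WithBot ℝ))
            (Finset.mem_univ j)
          rw [h, le_bot_iff] at hle
          exact (WithBot.add_ne_bot.mpr ⟨hj, WithBot.coe_ne_bot⟩) hle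
        obtain ⟨r, hr⟩ := WithBot.ne_bot_iff_exists.mp hne
        exact ⟨r, hr.symm⟩
      choose w hw using hwex
      have hwle : ∀ i, ((w i : ℝ) : WithBot ℝ) ≤ (0 : WithBot ℝ) := by
        intro i
        rw [← hw i]
        apply Finset.sup_le
        intro j _
        have hAq : A i j ≤ ((q j : ℝ) : WithBot ℝ) := by
          rw [← hq j]
          exact Finset.le_sup (f := fun i => A i j) (Finset.mem_univ i)
        calc A i j + ((-(q j) : ℝ) : WithBot ℝ)
            ≤ ((q j : ℝ) : WithBot ℝ) + ((-(q j) : ℝ) : WithBot ℝ) :=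
              add_le_add_left hAq _
          _ = 0 := by rw [← WithBot.coe_add]; norm_num
      have hw0 : ∃ i0, (0 : WithBot ℝ) ≤ ((w i0 : ℝ) : WithBot ℝ) := by
        obtain ⟨i0, -, hi0⟩ := Finset.exists_mem_eq_sup Finset.univ Finset.univ_nonempty
          (fun i => A i (⟨0, hn⟩ : Fin n))
        refine ⟨i0, ?_⟩
        have hA0 : A i0 ⟨0, hn⟩ = ((q ⟨0, hn⟩ : ℝ) : WithBot ℝ) := by
          rw [← hi0, hq]
        rw [← hw i0]
        have h0 : (0 : WithBot ℝ) = A i0 ⟨0, hn⟩ + ((-(q ⟨0, hn⟩) : ℝ) : WithBot ℝ) := by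
          rw [hA0, ← WithBot.coe_add]; norm_num
        rw [h0]
        exact Finset.le_sup (f := fun j => A i0 j + ((-(q j) : ℝ) : WithBot ℝ))
          (Finset.mem_univ _)
      have hsupw : Finset.univ.sup (fun i => ((w i : ℝ) : WithBot ℝ)) = 0 := by
        apply le_antisymm
        · exact Finset.sup_le fun i _ => hwle i
        · obtain ⟨i0, hi0⟩ := hw0
          exact le_trans hi0 (Finset.le_sup (f := fun i => ((w i : ℝ) : WithBot ℝ))
            (Finset.mem_univ i0))
      have hΔval : Δ = Finset.univ.sup (fun i => ((-(w i) : ℝ) : WithBot ℝ)) := by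
        rw [hΔ, cdot_ones_right]
        apply Finset.sup_congr rfl
        intro i _
        have hmv : mulVec A (fun j => tinv (cdot (onesV m) fun i => A i j)) i
            = ((w i : ℝ) : WithBot ℝ) := by
          unfold mulVec
          simp only [hxhat]
          exact hw i
        rw [hmv, tinv_coe]
      constructor
      · -- the minimality claim
        intro x hx
        choose y hy using fun j => WithBot.ne_bot_iff_exists.mp (hx j)
        have hvex : ∀ i : Fin m, ∃ r : ℝ, mulVec A x i = (r : WithBot ℝ) := by
          intro i
          obtain ⟨j, hj⟩ := hrow i
          have hne : mulVec A x i ≠ ⊥ := by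
            intro h
            have hle := Finset.le_sup (f := fun j => A i j + x j) (Finset.mem_univ j)
            rw [show (Finset.univ.sup fun j => A i j + x j) = mulVec A x i from rfl,
              h, le_bot_iff] at hle
            exact (WithBot.add_ne_bot.mpr ⟨hj, hx j⟩) hle
          obtain ⟨r, hr⟩ := WithBot.ne_bot_iff_exists.mp hne
          exact ⟨r, hr.symm⟩
        choose v hv using hvex
        rw [cdot_ones_left, cdot_ones_right, hΔval]
        have hsv : Finset.univ.sup (mulVec A x)
            = Finset.univ.sup (fun i => ((v i : ℝ) : WithBot ℝ)) :=
          Finset.sup_congr rfl (fun i _ => hv i)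
        have hsv2 : Finset.univ.sup (fun i => tinv (mulVec A x i))
            = Finset.univ.sup (fun i => ((-(v i) : ℝ) : WithBot ℝ)) :=
          Finset.sup_congr rfl (fun i _ => by rw [hv i, tinv_coe])
        rw [hsv, hsv2]
        set S : ℝ := Finset.univ.sup' Finset.univ_nonempty (fun j => q j + y j) with hS
        have hkey : ∀ i, (v i : ℝ) ≤ w i + S := by
          intro i
          have : ((v i : ℝ) : WithBot ℝ) ≤ ((w i + S : ℝ) : WithBot ℝ) := by
            rw [← hv i]
            apply Finset.sup_le
            intro j _
            have hyj : x j = ((-(q j) : ℝ) : WithBot ℝ) + ((q j + y j : ℝ) : WithBot ℝ) := by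
              rw [← WithBot.coe_add, ← hy j]
              norm_num
            rw [hyj, ← add_assoc, WithBot.coe_add (w i) S]
            apply add_le_add
            · rw [← hw i]
              exact Finset.le_sup (f := fun j => A i j + ((-(q j) : ℝ) : WithBot ℝ))
                (Finset.mem_univ j)
            · exact_mod_cast Finset.le_sup' (fun j => q j + y j) (Finset.mem_univ j)
          exact_mod_cast this
        have hSle : ((S : ℝ) : WithBot ℝ) ≤ Finset.univ.sup (fun i => ((v i : ℝ) : WithBot ℝ)) := by
          obtain ⟨j0, -, hj0⟩ := Finset.exists_mem_eq_sup' Finset.univ_nonempty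
            (fun j => q j + y j)
          obtain ⟨i0, -, hi0⟩ := Finset.exists_mem_eq_sup Finset.univ Finset.univ_nonempty
            (fun i => A i j0)
          have hA0 : A i0 j0 = ((q j0 : ℝ) : WithBot ℝ) := by rw [← hi0, hq]
          have h1 : ((S : ℝ) : WithBot ℝ) ≤ ((v i0 : ℝ) : WithBot ℝ) := by
            rw [← hv i0]
            have h2 : ((S : ℝ) : WithBot ℝ) = A i0 j0 + x j0 := by
              rw [hA0, ← hy j0, ← WithBot.coe_add, hS, hj0]
            rw [h2]
            exact Finset.le_sup (f := fun j => A i0 j + x j) (Finset.mem_univ j0)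
          exact le_trans h1 (Finset.le_sup (f := fun i => ((v i : ℝ) : WithBot ℝ))
            (Finset.mem_univ i0))
        apply Finset.sup_le
        intro i _
        calc ((-(w i) : ℝ) : WithBot ℝ)
            ≤ ((S : ℝ) : WithBot ℝ) + ((-(v i) : ℝ) : WithBot ℝ) := by
              rw [← WithBot.coe_add]
              exact_mod_cast (by have := hkey i; linarith : (-(w i) : ℝ) ≤ S + -(v i))
          _ ≤ _ := add_le_add hSle
            (Finset.le_sup (f := fun i => ((-(v i) : ℝ) : WithBot ℝ)) (Finset.mem_univ i))
      · -- the attainment claim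
        intro α
        constructor
        · intro j
          simp only [hxhat j, ← WithBot.coe_add]
          exact WithBot.coe_ne_bot
        · have hAx : ∀ i, mulVec A
              (fun j => (α : WithBot ℝ) + tinv (cdot (onesV m) fun i => A i j)) i
              = ((w i + α : ℝ) : WithBot ℝ) := by
            intro i
            unfold mulVec
            simp only [hxhat]
            have hre : ∀ j : Fin n, A i j + ((α : ℝ) + ((-(q j) : ℝ) : WithBot ℝ))
                = (A i j + ((-(q j) : ℝ) : WithBot ℝ)) + ((α : ℝ) : WithBot ℝ) := by
              intro j
              rw [add_assoc, add_comm ((-(q j) : ℝ) : WithBot ℝ)]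
            simp only [hre]
            rw [sup_add_const, hw i, ← WithBot.coe_add]
          rw [cdot_ones_left, cdot_ones_right]
          have hs1 : Finset.univ.sup (mulVec A
              (fun j => (α : WithBot ℝ) + tinv (cdot (onesV m) fun i => A i j)))
              = Finset.univ.sup (fun i => ((w i + α : ℝ) : WithBot ℝ)) :=
            Finset.sup_congr rfl (fun i _ => hAx i)
          have hs2 : Finset.univ.sup (fun i => tinv (mulVec A
              (fun j => (α : WithBot ℝ) + tinv (cdot (onesV m) fun i => A i j)) i))
              = Finset.univ.sup (fun i => ((-(w i) + -α : ℝ) : WithBot ℝ)) :=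
            Finset.sup_congr rfl (fun i _ => by rw [hAx i, tinv_coe]; congr 1; ring)
          rw [hs1, hs2, hΔval]
          have e1 : Finset.univ.sup (fun i => ((w i + α : ℝ) : WithBot ℝ))
              = Finset.univ.sup (fun i => ((w i : ℝ) : WithBot ℝ)) + ((α : ℝ) : WithBot ℝ) := by
            rw [← sup_add_const]
            exact Finset.sup_congr rfl (fun i _ => by rw [← WithBot.coe_add])
          have e2 : Finset.univ.sup (fun i => ((-(w i) + -α : ℝ) : WithBot ℝ))
              = Finset.univ.sup (fun i => ((-(w i) : ℝ) : WithBot ℝ)) + ((-α : ℝ) : WithBot ℝ) := by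
            rw [← sup_add_const]
            exact Finset.sup_congr rfl (fun i _ => by rw [← WithBot.coe_add])
          rw [e1, e2, hsupw, zero_add, add_comm ((α : ℝ) : WithBot ℝ), add_assoc,
            ← WithBot.coe_add]
          norm_num
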